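/- Let n > 1 and x > 0. Define the n×n upper triangular matrix ν(x) by ν(x)_{jj} = 1 and ν(x)_{jk} = (1 - e^{-x})·e^{(k-j)x/2} for j < k (and 0 for j > k). Then the Hermitian matrix ν(x)ν(x)† has exactly two distinct eigenvalues, one of which has multiplicity 1 (the other having multiplicity n-1). -/

import Mathlib

open Matrix Polynomial

lemma aux_geo {R : Type*} [CommRing R] (c E : R) (hc : c * E^2 = E^2 - 1) (p q : ℕ) :
    ∑ d ∈ Finset.range q, (c*E^(p+1+d)) * (c*E^(d+1)) = c * E^(p+q) * E^q - c * E^p := by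
  induction q with
  | zero => simp
  | succ q ih =>
    rw [Finset.sum_range_succ, ih]
    linear_combination (c * E^p * E^q * E^q) * hc

lemma aux_sum {R : Type*} [CommRing R] (c E : R) (hc : c * E^2 = E^2 - 1) (n j k : ℕ)
    (hjk : j ≤ k) (hk : k < n) :
    ∑ m ∈ Finset.range n, ((if j = m then (1:R) else if j < m then c*E^(m-j) else 0) *
        (if k = m then (1:R) else if k < m then c*E^(m-k) else 0))
      = (if j = k then 1 - c else 0) + c * E^(n-1-j) * E^(n-1-k) := by
  have h1 : k + 1 ≤ n := hk
  have e1 : ∑ m ∈ Finset.range (k+1), ((if j = m then (1:R) else if j < m then c*E^(m-j) else 0) *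
        (if k = m then (1:R) else if k < m then c*E^(m-k) else 0))
      = (if j = k then (1:R) else if j < k then c*E^(k-j) else 0) := by
    rw [Finset.sum_range_succ]
    have hz : ∑ m ∈ Finset.range k, ((if j = m then (1:R) else if j < m then c*E^(m-j) else 0) *
        (if k = m then (1:R) else if k < m then c*E^(m-k) else 0)) = 0 := by
      apply Finset.sum_eq_zero
      intro i hi
      rw [Finset.mem_range] at hi
      rw [if_neg (show ¬ k = i by omega), if_neg (show ¬ k < i by omega), mul_zero]
    rw [hz, zero_add, if_pos rfl, mul_one]
  have e2 : ∑ m ∈ Finset.Ico (k+1) n, ((if j = m then (1:R) else if j < m then c*E^(m-j) else 0) *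
        (if k = m then (1:R) else if k < m then c*E^(m-k) else 0))
      = c * E^(n-1-j) * E^(n-1-k) - c * E^(k-j) := by
    rw [Finset.sum_Ico_eq_sum_range]
    have hcg : ∀ d ∈ Finset.range (n - (k+1)),
        ((if j = k+1+d then (1:R) else if j < k+1+d then c*E^(k+1+d-j) else 0) *
          (if k = k+1+d then (1:R) else if k < k+1+d then c*E^(k+1+d-k) else 0))
        = (c*E^((k-j)+1+d)) * (c*E^(d+1)) := by
      intro d _
      rw [if_neg (show ¬ j = k+1+d by omega), if_pos (show j < k+1+d by omega), if_neg (show ¬ k = k+1+d by omega), if_pos (show k < k+1+d by omega)]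
      have h2 : k+1+d-j = (k-j)+1+d := by omega
      have h3 : k+1+d-k = d+1 := by omega
      rw [h2, h3]
    rw [Finset.sum_congr rfl hcg, aux_geo c E hc (k-j) (n-(k+1))]
    have h4 : (k-j) + (n-(k+1)) = n-1-j := by omega
    have h5 : n-(k+1) = n-1-k := by omega
    rw [h4, h5]
  rw [Finset.range_eq_Ico, ← Finset.sum_Ico_consecutive _ (Nat.zero_le (k+1)) h1,
    ← Finset.range_eq_Ico, e1, e2]
  rcases eq_or_lt_of_le hjk with h | h
  · subst h
    rw [if_pos rfl, if_pos rfl]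
    have : j - j = 0 := by omega
    rw [this, pow_zero, mul_one]
    ring
  · rw [if_neg (show ¬ j = k by omega), if_pos h, if_neg (show ¬ j = k by omega)]
    ring


lemma aux_eval_charpoly (n : ℕ) (M : Matrix (Fin n) (Fin n) ℂ) (t : ℂ) :
    eval t M.charpoly = det (t • (1 : Matrix (Fin n) (Fin n) ℂ) - M) := by
  rw [Matrix.charpoly, ← Polynomial.coe_evalRingHom, RingHom.map_det]
  congr 1
  ext i j
  by_cases h : i = j
  · subst h; simp [charmatrix_apply_eq, Matrix.one_apply]
  · simp [charmatrix_apply_ne _ _ _ h, Matrix.one_apply_ne h]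

lemma aux_det (n : ℕ) (u w : Fin n → ℂ) (a t : ℂ) (ht : t ≠ a) :
    det (t • (1 : Matrix (Fin n) (Fin n) ℂ) - (a • 1 + replicateCol Unit u * replicateRow Unit w))
      = (t - a) ^ n - (w ⬝ᵥ u) * (t - a) ^ (n - 1) := by
  have hta : t - a ≠ 0 := sub_ne_zero.mpr ht
  have h1 : t • (1 : Matrix (Fin n) (Fin n) ℂ) - (a • 1 + replicateCol Unit u * replicateRow Unit w)
      = (t - a) • ((1 : Matrix (Fin n) (Fin n) ℂ) + replicateCol Unit ((-(t - a)⁻¹) • u) * replicateRow Unit w) := by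
    rw [Matrix.replicateCol_smul, smul_add, Matrix.smul_mul, smul_smul, sub_smul]
    have : (t - a) * -(t - a)⁻¹ = -1 := by field_simp
    rw [this]
    simp [neg_one_smul]
    abel
  rw [h1, det_smul, det_one_add_replicateCol_mul_replicateRow]
  have hd : w ⬝ᵥ (-(t - a)⁻¹ • u) = -(t - a)⁻¹ * (w ⬝ᵥ u) := by
    rw [dotProduct_smul]; simp [smul_eq_mul]
  rw [hd]
  rcases Nat.eq_zero_or_pos n with h | h
  · subst h; simp
  have hn1 : (t - a) ^ n = (t - a) ^ (n - 1) * (t - a) := by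
    rw [← pow_succ]; congr 1; omega
  rw [Fintype.card_fin]
  field_simp
  rw [hn1]
  ring

theorem stmt5 (n : ℕ) (hn : 1 < n) (x : ℝ) (hx : 0 < x)
    (ν : Matrix (Fin n) (Fin n) ℂ)
    (hν : ∀ j k : Fin n, ν j k =
      if j = k then 1
      else if (j : ℕ) < (k : ℕ) then
        (((1 - Real.exp (-x)) * Real.exp ((((k : ℕ) : ℝ) - ((j : ℕ) : ℝ)) * x / 2) : ℝ) : ℂ)
      else 0) :
    ∃ a b : ℂ, a ≠ b ∧
      (ν * νᴴ).charpoly = (X - C a) * (X - C b) ^ (n - 1) := by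
  set fE : ℝ := Real.exp (x / 2) with hfE
  set fc : ℝ := 1 - Real.exp (-x) with hfc
  have hE2 : fE ^ 2 = Real.exp x := by
    rw [hfE, ← Real.exp_nat_mul]
    congr 1
    push_cast
    ring
  have hcE : fc * fE ^ 2 = fE ^ 2 - 1 := by
    rw [hE2, hfc, sub_mul, one_mul, ← Real.exp_add]
    norm_num
  -- entries of ν as casts of real values
  set g : ℕ → ℕ → ℝ := fun j m => if j = m then 1 else if j < m then fc * fE ^ (m - j) else 0
    with hg
  have hνg : ∀ j k : Fin n, ν j k = ((g (j : ℕ) (k : ℕ) : ℝ) : ℂ) := by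
    intro j k
    rw [hν j k, hg]
    by_cases h : j = k
    · subst h; simp
    · have h' : ¬ (j : ℕ) = (k : ℕ) := fun hh => h (Fin.ext hh)
      rw [if_neg h]
      simp only [h', if_false]
      by_cases h2 : (j : ℕ) < (k : ℕ)
      · have harg : Real.exp ((((k : ℕ) : ℝ) - ((j : ℕ) : ℝ)) * x / 2)
            = fE ^ ((k : ℕ) - (j : ℕ)) := by
          have h3 : ((((k : ℕ) - (j : ℕ) : ℕ)) : ℝ) * (x / 2)
              = (((k : ℕ) : ℝ) - ((j : ℕ) : ℝ)) * x / 2 := by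
            push_cast [Nat.cast_sub (le_of_lt h2)]; ring
          rw [hfE, ← Real.exp_nat_mul, h3]
        rw [if_pos h2, if_pos h2, harg]
      · rw [if_neg h2, if_neg h2]
        simp
  -- the vectors of the rank-one part
  set u : Fin n → ℂ := fun j => ((fc * fE ^ (n - 1 - (j : ℕ)) : ℝ) : ℂ) with hu
  set w : Fin n → ℂ := fun k => ((fE ^ (n - 1 - (k : ℕ)) : ℝ) : ℂ) with hw
  set a : ℂ := ((Real.exp (-x) : ℝ) : ℂ) with ha
  have hM : ν * νᴴ = a • (1 : Matrix (Fin n) (Fin n) ℂ) + replicateCol Unit u * replicateRow Unit w := by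
    ext j k
    rw [Matrix.mul_apply]
    have hterm : ∀ m : Fin n, ν j m * νᴴ m k = ((g (j:ℕ) (m:ℕ) * g (k:ℕ) (m:ℕ) : ℝ) : ℂ) := by
      intro m
      rw [Matrix.conjTranspose_apply, hνg j m, hνg k m]
      rw [show star ((g (k:ℕ) (m:ℕ) : ℝ) : ℂ) = ((g (k:ℕ) (m:ℕ) : ℝ) : ℂ) from Complex.conj_ofReal _]
      push_cast; ring
    rw [Finset.sum_congr rfl (fun m _ => hterm m)]
    rw [← Complex.ofReal_sum]
    have hsum : ∑ m : Fin n, g (j:ℕ) (m:ℕ) * g (k:ℕ) (m:ℕ)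
        = ∑ m ∈ Finset.range n, g (j:ℕ) m * g (k:ℕ) m :=
      Fin.sum_univ_eq_sum_range (fun m => g (j:ℕ) m * g (k:ℕ) m) n
    rw [hsum]
    have key : ∑ m ∈ Finset.range n, g (j:ℕ) m * g (k:ℕ) m
        = (if (j:ℕ) = (k:ℕ) then 1 - fc else 0) + fc * fE^(n-1-(j:ℕ)) * fE^(n-1-(k:ℕ)) := by
      rcases le_or_gt (j:ℕ) (k:ℕ) with h | h
      · exact aux_sum fc fE hcE n (j:ℕ) (k:ℕ) h k.isLt
      · have := aux_sum fc fE hcE n (k:ℕ) (j:ℕ) (le_of_lt h) j.isLt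
        calc ∑ m ∈ Finset.range n, g (j:ℕ) m * g (k:ℕ) m
            = ∑ m ∈ Finset.range n, g (k:ℕ) m * g (j:ℕ) m := by
              apply Finset.sum_congr rfl; intro m _; ring
          _ = (if (k:ℕ) = (j:ℕ) then 1 - fc else 0) + fc * fE^(n-1-(k:ℕ)) * fE^(n-1-(j:ℕ)) := this
          _ = (if (j:ℕ) = (k:ℕ) then 1 - fc else 0) + fc * fE^(n-1-(j:ℕ)) * fE^(n-1-(k:ℕ)) := by
              by_cases hh : (j:ℕ) = (k:ℕ)
              · rw [if_pos hh, if_pos hh.symm]; ring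
              · rw [if_neg (fun h2 => hh h2.symm), if_neg hh]; ring
    rw [key]
    -- right hand side entry
    have hrhs : (a • (1 : Matrix (Fin n) (Fin n) ℂ) + replicateCol Unit u * replicateRow Unit w) j k
        = a * (if j = k then 1 else 0) + u j * w k := by
      rw [Matrix.add_apply, Matrix.smul_apply, Matrix.mul_apply, Matrix.one_apply]
      simp [Matrix.replicateCol_apply, Matrix.replicateRow_apply, smul_eq_mul]
    rw [hrhs, hu, hw, ha]
    have hjk : (j = k) ↔ ((j:ℕ) = (k:ℕ)) := Fin.ext_iff
    by_cases h : j = k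
    · rw [if_pos h, if_pos (hjk.mp h)]
      have : (1 : ℝ) - fc = Real.exp (-x) := by rw [hfc]; ring
      rw [this]
      push_cast; ring
    · rw [if_neg h, if_neg (fun hh => h (hjk.mpr hh))]
      push_cast; ring
  -- the dot product w ⬝ᵥ u is a nonzero (positive real) number
  set s : ℂ := w ⬝ᵥ u with hs
  have hsreal : s = ((∑ k : Fin n, fE ^ (n - 1 - (k:ℕ)) * (fc * fE ^ (n - 1 - (k:ℕ))) : ℝ) : ℂ) := by
    rw [hs, dotProduct, Complex.ofReal_sum]
    apply Finset.sum_congr rfl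
    intro m _
    rw [hu, hw]
    push_cast; ring
  have hsne : s ≠ 0 := by
    rw [hsreal]
    have hpos : (0:ℝ) < ∑ k : Fin n, fE ^ (n - 1 - (k:ℕ)) * (fc * fE ^ (n - 1 - (k:ℕ))) := by
      apply Finset.sum_pos
      · intro i _
        have h1 : (0:ℝ) < fE := Real.exp_pos _
        have h2 : (0:ℝ) < fc := by
          rw [hfc]; simp only [sub_pos]
          exact Real.exp_lt_one_iff.mpr (by linarith)
        positivity
      · exact ⟨⟨0, by omega⟩, Finset.mem_univ _⟩
    exact_mod_cast ne_of_gt hpos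
  refine ⟨a + s, a, ?_, ?_⟩
  · intro h
    exact hsne (by linear_combination h)
  · apply Polynomial.eq_of_infinite_eval_eq
    apply Set.Infinite.mono (s := {a}ᶜ)
    · intro t ht
      have ht' : t ≠ a := ht
      simp only [Set.mem_setOf_eq]
      rw [aux_eval_charpoly, hM, aux_det n u w a t ht']
      have hn1 : (t - a) ^ n = (t - a) ^ (n - 1) * (t - a) := by
        rw [← pow_succ]; congr 1; omega
      simp only [eval_mul, eval_pow, eval_sub, eval_X, eval_C]
      rw [hn1]
      ring
    · exact (Set.finite_singleton a).infinite_compl
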